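/- Let (A, σ_1, …, σ_n) be an n-twisted commutative R-algebra with σ-coordinates x_1, …, x_n of Schwarz type and partial derivations ∂_{A,1}, …, ∂_{A,n}, and set y_i := x_i − σ_i(x_i). Let B be the corresponding n-twisted Weyl algebra (an R-algebra containing A with commuting elements ∂_1, …, ∂_n, the monomials ∂^k forming a left A-basis, and ∂_i·x = ∂_{A,i}(x) + σ_i(x)·∂_i for x ∈ A), and let P be a twisted polynomial ring in n variables over (A, σ) (a ring containing A with pairwise commuting elements T_1, …, T_n such that T_i·x = σ_i(x)·T_i for all x ∈ A and the monomials T^k form a left A-basis of P). Then there exists a unique R-algebra homomorphism Φ : P → B which is the identity on A and satisfies Φ(T_i) = 1 − y_i·∂_i for all i. If the coordinates are strong (each y_i a unit of A), then Φ is an isomorphism. -/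

import Mathlib

namespace Stmt19Aux

/-- ordered monomial -/
def monL {M : Type*} [Monoid M] {m : ℕ} (v : Fin m → M) (k : Fin m → ℕ) : M :=
  (List.ofFn fun i => v i ^ k i).prod

lemma monL_zero {M : Type*} [Monoid M] {m : ℕ} (v : Fin m → M) : monL v 0 = 1 := by
  simp [monL]

lemma monL_eq {M : Type*} [Monoid M] {m : ℕ} (v : Fin m → M) (k : Fin m → ℕ) :
    monL v k = (List.ofFn fun i => v i ^ k i).prod := rfl

lemma monL_single {M : Type*} [Monoid M] :
    ∀ {m : ℕ} (v : Fin m → M) (i : Fin m), monL v (Pi.single i 1) = v i := by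
  intro m
  induction m with
  | zero => exact fun v i => i.elim0
  | succ m ih =>
    intro v i
    rw [monL, List.ofFn_succ, List.prod_cons]
    rcases Fin.eq_zero_or_eq_succ i with rfl | ⟨j, rfl⟩
    · have h1 : (Pi.single (0 : Fin (m+1)) 1 : Fin (m+1) → ℕ) 0 = 1 := Pi.single_eq_same _ _
      have h2 : ∀ jj : Fin m, (Pi.single (0 : Fin (m+1)) 1 : Fin (m+1) → ℕ) jj.succ = 0 :=
        fun jj => Pi.single_eq_of_ne (Fin.succ_ne_zero jj) _
      simp [h1, h2]
    · have h1 : (Pi.single (j.succ : Fin (m+1)) 1 : Fin (m+1) → ℕ) 0 = 0 :=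
        Pi.single_eq_of_ne (Fin.succ_ne_zero j).symm _
      have h2 : ∀ jj : Fin m, (Pi.single (j.succ : Fin (m+1)) 1 : Fin (m+1) → ℕ) jj.succ
          = (Pi.single j 1 : Fin m → ℕ) jj := by
        intro jj
        simp [Pi.single_apply, Fin.succ_inj]
      simp only [h1, pow_zero, one_mul]
      have := ih (fun jj : Fin m => v jj.succ) j
      rw [monL] at this
      simp only [h2]
      exact this

lemma monL_add {M : Type*} [Monoid M] :
    ∀ {m : ℕ} (v : Fin m → M) (_h : ∀ i j, Commute (v i) (v j)) (k k' : Fin m → ℕ),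
      monL v (k + k') = monL v k * monL v k' := by
  intro m
  induction m with
  | zero => intro v h k k'; simp [monL]
  | succ m ih =>
    intro v h k k'
    have htail := ih (fun i => v i.succ) (fun i j => h i.succ j.succ)
      (fun i => k i.succ) (fun i => k' i.succ)
    rw [monL, monL, monL, List.ofFn_succ, List.ofFn_succ, List.ofFn_succ,
      List.prod_cons, List.prod_cons, List.prod_cons]
    have hPi : (k + k') 0 = k 0 + k' 0 := rfl
    rw [hPi, pow_add]
    have hmid : Commute (v 0 ^ k' 0)
        ((List.ofFn fun i : Fin m => v i.succ ^ (k i.succ)).prod) := by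
      apply Commute.list_prod_right
      intro y hy
      rw [List.mem_ofFn] at hy
      obtain ⟨j, rfl⟩ := hy
      exact (h 0 j.succ).pow_pow _ _
    have : (List.ofFn fun i : Fin m => v i.succ ^ (k + k') i.succ).prod
        = (List.ofFn fun i : Fin m => v i.succ ^ (k i.succ)).prod *
          (List.ofFn fun i : Fin m => v i.succ ^ (k' i.succ)).prod := htail
    rw [this]
    rw [mul_assoc, mul_assoc, ← mul_assoc (v 0 ^ k' 0), hmid.eq, mul_assoc]


section Twist

variable {R A X : Type*} [CommRing R] [CommRing A] [Algebra R A] [Ring X] [Algebra R X]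

lemma pow_twist (ι : A →ₐ[R] X) (v : X) (w : A →ₐ[R] A)
    (h : ∀ a, v * ι a = ι (w a) * v) (t : ℕ) (a : A) :
    v ^ t * ι a = ι ((w ^ t) a) * v ^ t := by
  induction t generalizing a with
  | zero => simp
  | succ t ih =>
    have hw : (w ^ (t+1)) a = (w ^ t) (w a) := by
      rw [pow_succ, AlgHom.mul_apply]
    rw [pow_succ, mul_assoc, h a, ← mul_assoc, ih (w a), hw, mul_assoc]

lemma listProd_twist (ι : A →ₐ[R] X) :
    ∀ {m : ℕ} (v : Fin m → X) (w : Fin m → (A →ₐ[R] A))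
      (_h : ∀ i a, v i * ι a = ι (w i a) * v i) (a : A),
      (List.ofFn v).prod * ι a = ι ((List.ofFn w).prod a) * (List.ofFn v).prod := by
  intro m
  induction m with
  | zero => intro v w h a; simp
  | succ m ih =>
    intro v w h a
    rw [List.ofFn_succ, List.ofFn_succ, List.prod_cons, List.prod_cons]
    have htail := ih (fun i => v i.succ) (fun i => w i.succ) (fun i => h i.succ) a
    rw [mul_assoc, htail, ← mul_assoc, h 0, mul_assoc, AlgHom.mul_apply]

lemma monL_twist (ι : A →ₐ[R] X) {m : ℕ} (v : Fin m → X) (w : Fin m → (A →ₐ[R] A))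
    (h : ∀ i a, v i * ι a = ι (w i a) * v i) (k : Fin m → ℕ) (a : A) :
    monL v k * ι a = ι (monL w k a) * monL v k :=
  listProd_twist ι (fun i => v i ^ k i) (fun i => w i ^ k i)
    (fun i => pow_twist ι (v i) (w i) (h i) (k i)) a

end Twist


section CoeffMap

variable {R A X Y : Type*} [CommRing R] [CommRing A] [Algebra R A] [Ring X] [Algebra R X]
  [Ring Y] [Algebra R Y] {n : ℕ}

/-- the `A`-linear combination of ordered monomials with coefficient family `c` -/
noncomputable def coeffMap (ι : A →ₐ[R] X) (v : Fin n → X) :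
    ((Fin n → ℕ) →₀ A) →ₗ[R] X :=
  Finsupp.lsum R fun k => (LinearMap.mulRight R (monL v k)).comp ι.toLinearMap

lemma coeffMap_apply (ι : A →ₐ[R] X) (v : Fin n → X) (c : (Fin n → ℕ) →₀ A) :
    coeffMap ι v c = c.sum fun k a => ι a * monL v k := by
  simp [coeffMap, Finsupp.lsum_apply, Finsupp.sum]

lemma coeffMap_single (ι : A →ₐ[R] X) (v : Fin n → X) (k : Fin n → ℕ) (a : A) :
    coeffMap ι v (Finsupp.single k a) = ι a * monL v k := by
  rw [coeffMap_apply, Finsupp.sum_single_index]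
  simp

lemma coeffMap_smul (ι : A →ₐ[R] X) (v : Fin n → X) (a : A) (c : (Fin n → ℕ) →₀ A) :
    coeffMap ι v (a • c) = ι a * coeffMap ι v c := by
  induction c using Finsupp.induction_linear with
  | zero => simp
  | add f g hf hg => rw [smul_add, map_add, map_add, mul_add, hf, hg]
  | single k b =>
    rw [Finsupp.smul_single, coeffMap_single, coeffMap_single, smul_eq_mul, map_mul, mul_assoc]

lemma coeffMap_mapDomain (ι : A →ₐ[R] X) (v : Fin n → X)
    (f : (Fin n → ℕ) → (Fin n → ℕ)) (z : X) (h : ∀ k, monL v (f k) = monL v k * z)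
    (c : (Fin n → ℕ) →₀ A) :
    coeffMap ι v (c.mapDomain f) = coeffMap ι v c * z := by
  induction c using Finsupp.induction_linear with
  | zero => simp
  | add f g hf hg => rw [Finsupp.mapDomain_add, map_add, map_add, add_mul, hf, hg]
  | single k b =>
    rw [Finsupp.mapDomain_single, coeffMap_single, coeffMap_single, h, mul_assoc]

lemma map_monL (Ψ : X →ₐ[R] Y) (v : Fin n → X) (k : Fin n → ℕ) :
    Ψ (monL v k) = monL (fun i => Ψ (v i)) k := by
  rw [monL, monL, map_list_prod, List.map_ofFn]
  have hfun : (⇑Ψ ∘ fun i => v i ^ k i) = fun i => Ψ (v i) ^ k i := by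
    funext i; simp [Function.comp, map_pow]
  rw [hfun]

lemma map_coeffMap (Ψ : X →ₐ[R] Y) (ι : A →ₐ[R] X) (v : Fin n → X) (c : (Fin n → ℕ) →₀ A) :
    Ψ (coeffMap ι v c) = coeffMap (Ψ.comp ι) (fun i => Ψ (v i)) c := by
  rw [coeffMap_apply, coeffMap_apply, map_finsuppSum]
  apply Finsupp.sum_congr
  intro k _
  rw [map_mul, map_monL]
  rfl

end CoeffMap

end Stmt19Aux

open Stmt19Aux

/-- For an `n`-twisted commutative `R`-algebra with `σ`-coordinates of Schwarz type, there is a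
unique `A`-linear `R`-algebra homomorphism `Φ` from the twisted polynomial ring `P = A[T]_σ` to
the twisted Weyl algebra `B` with `Φ(T_i) = 1 - y_i·∂_i` (where `y_i := x_i - σ_i(x_i)`);
if the coordinates are strong, `Φ` is an isomorphism. -/
theorem stmt19 {R A B P : Type*} [CommRing R] [CommRing A] [Algebra R A]
    [Ring B] [Algebra R B] [Ring P] [Algebra R P]
    (n : ℕ) (σ : Fin n → A →ₐ[R] A) (x : Fin n → A) (pdA : Fin n → A →ₗ[R] A)
    (hσcomm : ∀ i j a, σ i (σ j a) = σ j (σ i a))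
    (hpdder : ∀ i a b, pdA i (a * b) = b * pdA i a + σ i a * pdA i b)
    (hpdx : ∀ i j, pdA i (x j) = if j = i then 1 else 0)
    (huniq : ∀ i (D : A →ₗ[R] A), (∀ a b, D (a * b) = b * D a + σ i a * D b) →
      (∀ j, D (x j) = if j = i then 1 else 0) → D = pdA i)
    (hspan : ∀ D : A →ₗ[R] A,
      (∃ Ds : Fin n → A →ₗ[R] A,
        (∀ i a b, Ds i (a * b) = b * Ds i a + σ i a * Ds i b) ∧ D = ∑ i, Ds i) →
      D = ∑ i, D (x i) • pdA i)
    (hSchwarz1 : ∀ i j a, pdA i (pdA j a) = pdA j (pdA i a))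
    (hSchwarz2 : ∀ i j, i ≠ j → ∀ a, σ i (pdA j a) = pdA j (σ i a))
    -- the twisted Weyl algebra B
    (ιB : A →ₐ[R] B) (hιB : Function.Injective ιB)
    (pd : Fin n → B)
    (hpdcomm : ∀ i j, pd i * pd j = pd j * pd i)
    (hbasisB : ∀ b : B, ∃! c : (Fin n → ℕ) →₀ A,
      b = c.sum fun k a => ιB a * (List.ofFn fun i => pd i ^ k i).prod)
    (hrelB : ∀ i (a : A), pd i * ιB a = ιB (pdA i a) + ιB (σ i a) * pd i)
    -- the twisted polynomial ring P
    (ιP : A →ₐ[R] P) (hιP : Function.Injective ιP)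
    (T : Fin n → P)
    (hTcomm : ∀ i j, T i * T j = T j * T i)
    (hbasisP : ∀ p : P, ∃! c : (Fin n → ℕ) →₀ A,
      p = c.sum fun k a => ιP a * (List.ofFn fun i => T i ^ k i).prod)
    (hrelP : ∀ i (a : A), T i * ιP a = ιP (σ i a) * T i) :
    (∃! Φ : P →ₐ[R] B,
      (∀ a : A, Φ (ιP a) = ιB a) ∧
      ∀ i, Φ (T i) = 1 - ιB (x i - σ i (x i)) * pd i) ∧
    ((∀ i, IsUnit (x i - σ i (x i))) →
      ∀ Φ : P →ₐ[R] B,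
        (∀ a : A, Φ (ιP a) = ιB a) →
        (∀ i, Φ (T i) = 1 - ιB (x i - σ i (x i)) * pd i) →
        Function.Bijective Φ) := by
  classical
  -- notation
  set y : Fin n → A := fun i => x i - σ i (x i) with hydef
  set S : Fin n → B := fun i => 1 - ιB (y i) * pd i with hSdef0
  have hSdef : ∀ i, S i = 1 - ιB (y i) * pd i := fun i => rfl
  have hyi : ∀ i, y i = x i - σ i (x i) := fun i => rfl
  -- σ fixes the other coordinates
  have hxfix : ∀ i j, j ≠ i → σ i (x j) = x j := by
    intro i j hne
    have e1 : pdA i (x i * x j) = x j := by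
      rw [hpdder, hpdx i i, hpdx i j, if_pos rfl, if_neg hne]; ring
    have e2 : pdA i (x j * x i) = σ i (x j) := by
      rw [hpdder, hpdx i i, hpdx i j, if_pos rfl, if_neg hne]; ring
    rw [mul_comm] at e1
    exact (e1.symm.trans e2).symm
  -- key identity
  have hkey : ∀ i a, y i * pdA i a = a - σ i a := by
    intro i
    set D : A →ₗ[R] A := LinearMap.id - (σ i).toLinearMap with hD
    have hDapp : ∀ a, D a = a - σ i a := fun a => rfl
    have hDder : ∀ a b, D (a * b) = b * D a + σ i a * D b := by
      intro a b; simp only [hDapp, map_mul]; ring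
    have hsum : D = ∑ j, D (x j) • pdA j := by
      apply hspan
      refine ⟨Pi.single i D, ?_, ?_⟩
      · intro j a b
        rcases eq_or_ne j i with rfl | hne
        · simpa [Pi.single_eq_same] using hDder a b
        · simp [Pi.single_eq_of_ne hne]
      · rw [Finset.sum_pi_single']
        simp
    intro a
    have h1 := LinearMap.congr_fun hsum a
    rw [LinearMap.sum_apply] at h1
    have h2 : ∀ j, (D (x j) • pdA j) a = D (x j) * pdA j a := fun j => rfl
    have h3 : ∑ j, (D (x j) • pdA j) a = D (x i) * pdA i a := by
      rw [Finset.sum_eq_single i]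
      · exact h2 i
      · intro b _ hb
        rw [h2 b]
        have : D (x b) = 0 := by
          rw [hDapp, hxfix i b hb, sub_self]
        rw [this, zero_mul]
      · intro h; exact absurd (Finset.mem_univ i) h
    rw [h3] at h1
    have h4 : D (x i) = y i := rfl
    rw [h4] at h1
    rw [← h1, hDapp]
  -- the S relation
  have hrelS : ∀ i a, S i * ιB a = ιB (σ i a) * S i := by
    intro i a
    have h1 : ιB (y i) * ιB (pdA i a) = ιB a - ιB (σ i a) := by
      rw [← map_mul, hkey, map_sub]
    have hc : ιB (y i) * ιB (σ i a) = ιB (σ i a) * ιB (y i) := by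
      rw [← map_mul, ← map_mul, mul_comm]
    calc S i * ιB a = (1 - ιB (y i) * pd i) * ιB a := by rw [hSdef]
      _ = ιB a - ιB (y i) * (pd i * ιB a) := by noncomm_ring
      _ = ιB a - ιB (y i) * (ιB (pdA i a) + ιB (σ i a) * pd i) := by rw [hrelB]
      _ = ιB a - ιB (y i) * ιB (pdA i a) - ιB (y i) * ιB (σ i a) * pd i := by noncomm_ring
      _ = ιB (σ i a) * (1 - ιB (y i) * pd i) := by rw [h1, hc]; noncomm_ring
      _ = ιB (σ i a) * S i := by rw [hSdef]
  -- σ and pdA on the other y's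
  have hσy : ∀ i j, i ≠ j → σ i (y j) = y j := by
    intro i j hne
    rw [hyi, map_sub, hσcomm, hxfix i j hne.symm]
  have hpdy : ∀ i j, i ≠ j → pdA i (y j) = 0 := by
    intro i j hne
    rw [hyi, map_sub, ← hSchwarz2 j i hne.symm, hpdx i j, if_neg hne.symm, map_zero, sub_zero]
  have hpdYcomm : ∀ i j, i ≠ j → pd i * ιB (y j) = ιB (y j) * pd i := by
    intro i j hne
    rw [hrelB, hpdy i j hne, hσy i j hne, map_zero, zero_add]
  have hScomm : ∀ i j, S i * S j = S j * S i := by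
    intro i j
    rcases eq_or_ne i j with rfl | hne
    · rfl
    have hYY : ιB (y i) * ιB (y j) = ιB (y j) * ιB (y i) := by
      rw [← map_mul, ← map_mul, mul_comm]
    have hij := hpdYcomm i j hne
    have hji := hpdYcomm j i hne.symm
    have hpp := hpdcomm i j
    have hexp : ∀ a b c d : B, (1 - a * b) * (1 - c * d) = 1 - a * b - c * d + a * (b * c) * d := by
      intro a b c d; noncomm_ring
    rw [hSdef i, hSdef j, hexp, hexp, hij, hji]
    have e1 : ιB (y i) * (ιB (y j) * pd i) * pd j = ιB (y i) * ιB (y j) * (pd i * pd j) := by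
      noncomm_ring
    have e2 : ιB (y j) * (ιB (y i) * pd j) * pd i = ιB (y j) * ιB (y i) * (pd j * pd i) := by
      noncomm_ring
    rw [e1, e2, hYY, hpp]
    noncomm_ring
  -- linear maps
  set LB := coeffMap ιB pd with hLBdef
  set LS := coeffMap ιB S with hLSdef
  set LT := coeffMap ιP T with hLTdef
  have hLB_single : ∀ k a, LB (Finsupp.single k a) = ιB a * monL pd k :=
    fun k a => coeffMap_single ιB pd k a
  have hLS_single : ∀ k a, LS (Finsupp.single k a) = ιB a * monL S k :=
    fun k a => coeffMap_single ιB S k a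
  have hLT_single : ∀ k a, LT (Finsupp.single k a) = ιP a * monL T k :=
    fun k a => coeffMap_single ιP T k a
  -- basis translations
  have hbB : ∀ b : B, ∃! c, b = LB c := by
    intro b
    have h := hbasisB b
    have heq : ∀ c : (Fin n → ℕ) →₀ A,
        (c.sum fun k a => ιB a * (List.ofFn fun i => pd i ^ k i).prod) = LB c :=
      fun c => (coeffMap_apply ιB pd c).symm
    simpa only [heq] using h
  have hbP : ∀ p : P, ∃! c, p = LT c := by
    intro p
    have h := hbasisP p
    have heq : ∀ c : (Fin n → ℕ) →₀ A,
        (c.sum fun k a => ιP a * (List.ofFn fun i => T i ^ k i).prod) = LT c :=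
      fun c => (coeffMap_apply ιP T c).symm
    simpa only [heq] using h
  have hLBinj : Function.Injective LB := fun c c' h => (hbB (LB c)).unique rfl h
  have hLTinj : Function.Injective LT := fun c c' h => (hbP (LT c)).unique rfl h
  have hLTsurj : Function.Surjective LT := by
    intro p
    obtain ⟨c, hc, -⟩ := hbP p
    exact ⟨c, hc.symm⟩
  have hLBsurj : Function.Surjective LB := by
    intro b
    obtain ⟨c, hc, -⟩ := hbB b
    exact ⟨c, hc.symm⟩
  set eT := LinearEquiv.ofBijective LT ⟨hLTinj, hLTsurj⟩ with heTdef
  have heT : ∀ c, eT c = LT c := fun _ => rfl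
  have heTsymm : ∀ c, eT.symm (LT c) = c := by
    intro c
    have : eT.symm (eT c) = c := eT.symm_apply_apply c
    rwa [heT] at this
  have heTapp : ∀ p, LT (eT.symm p) = p := by
    intro p
    have : eT (eT.symm p) = p := eT.apply_symm_apply p
    rwa [heT] at this
  -- twist facts
  have hTt : ∀ k a, monL T k * ιP a = ιP (monL σ k a) * monL T k :=
    fun k a => monL_twist ιP T σ hrelP k a
  have hSt : ∀ k a, monL S k * ιB a = ιB (monL σ k a) * monL S k :=
    fun k a => monL_twist ιB S σ hrelS k a
  have hTadd : ∀ k k', monL T (k + k') = monL T k * monL T k' :=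
    monL_add T hTcomm
  have hSadd : ∀ k k', monL S (k + k') = monL S k * monL S k' :=
    monL_add S hScomm
  have hBadd : ∀ k k', monL pd (k + k') = monL pd k * monL pd k' :=
    monL_add pd hpdcomm
  have hσcommE : ∀ i j : Fin n, Commute (σ i) (σ j) := by
    intro i j
    show σ i * σ j = σ j * σ i
    ext a
    simpa [AlgHom.mul_apply] using hσcomm i j a
  have hσadd : ∀ k k', monL σ (k + k') = monL σ k * monL σ k' :=
    monL_add σ hσcommE
  -- the canonical linear map
  set Φlin : P →ₗ[R] B := LS.comp (eT.symm : P ≃ₗ[R] ((Fin n → ℕ) →₀ A)).toLinearMap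
    with hΦlindef
  have hΦc : ∀ c, Φlin (LT c) = LS c := by
    intro c
    show LS (eT.symm (LT c)) = LS c
    rw [heTsymm]
  have hΦone : Φlin 1 = 1 := by
    have h1 : (1 : P) = LT (Finsupp.single 0 1) := by
      rw [hLT_single, monL_zero, map_one, one_mul]
    rw [h1, hΦc, hLS_single, monL_zero, map_one, one_mul]
  have hss : ∀ k (a : A) k' (a' : A), (ιP a * monL T k) * (ιP a' * monL T k')
      = LT (Finsupp.single (k + k') (a * monL σ k a')) := by
    intro k a k' a'
    rw [hLT_single, hTadd]
    calc ιP a * monL T k * (ιP a' * monL T k')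
        = ιP a * (monL T k * ιP a') * monL T k' := by noncomm_ring
      _ = ιP a * (ιP (monL σ k a') * monL T k) * monL T k' := by rw [hTt]
      _ = ιP (a * monL σ k a') * (monL T k * monL T k') := by rw [map_mul]; noncomm_ring
  have hssB : ∀ k (a : A) k' (a' : A), (ιB a * monL S k) * (ιB a' * monL S k')
      = ιB (a * monL σ k a') * monL S (k + k') := by
    intro k a k' a'
    rw [hSadd]
    calc ιB a * monL S k * (ιB a' * monL S k')
        = ιB a * (monL S k * ιB a') * monL S k' := by noncomm_ring
      _ = ιB a * (ιB (monL σ k a') * monL S k) * monL S k' := by rw [hSt]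
      _ = ιB (a * monL σ k a') * (monL S k * monL S k') := by rw [map_mul]; noncomm_ring
  have hΦmul : ∀ p q : P, Φlin (p * q) = Φlin p * Φlin q := by
    have hcc : ∀ c d, Φlin (LT c * LT d) = LS c * LS d := by
      intro c d
      induction d using Finsupp.induction_linear with
      | zero => rw [map_zero, mul_zero, map_zero, map_zero, mul_zero]
      | add f g hf hg => rw [map_add, mul_add, map_add, map_add, mul_add, hf, hg]
      | single k' a' =>
        induction c using Finsupp.induction_linear with
        | zero => rw [map_zero, zero_mul, map_zero, map_zero, zero_mul]
        | add f g hf hg => rw [map_add, add_mul, map_add, map_add, add_mul, hf, hg]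
        | single k a =>
          rw [hLT_single k a, hLT_single k' a', hss, hΦc, hLS_single,
            hLS_single k a, hLS_single k' a', hssB]
    intro p q
    obtain ⟨c, rfl⟩ := hLTsurj p
    obtain ⟨d, rfl⟩ := hLTsurj q
    rw [hcc, hΦc, hΦc]
  set Φ : P →ₐ[R] B := AlgHom.ofLinearMap Φlin hΦone hΦmul with hΦdef
  have hΦapp : ∀ p, Φ p = Φlin p := fun p => rfl
  have hΦι : ∀ a, Φ (ιP a) = ιB a := by
    intro a
    have h : ιP a = LT (Finsupp.single 0 a) := by
      rw [hLT_single, monL_zero, mul_one]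
    rw [hΦapp, h, hΦc, hLS_single, monL_zero, mul_one]
  have hΦT : ∀ i, Φ (T i) = S i := by
    intro i
    have h : T i = LT (Finsupp.single (Pi.single i 1) 1) := by
      rw [hLT_single, monL_single, map_one, one_mul]
    rw [hΦapp, h, hΦc, hLS_single, monL_single, map_one, one_mul]
  -- expansion of an arbitrary algebra map with the right values
  have hhom : ∀ (Ψ : P →ₐ[R] B), (∀ a, Ψ (ιP a) = ιB a) → (∀ i, Ψ (T i) = S i) →
      ∀ p, Ψ p = LS (eT.symm p) := by
    intro Ψ h1 h2 p
    conv_lhs => rw [← heTapp p]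
    generalize eT.symm p = c
    rw [hLTdef, map_coeffMap]
    have e1 : Ψ.comp ιP = ιB := AlgHom.ext h1
    have e2 : (fun i => Ψ (T i)) = S := funext h2
    rw [e1, e2, hLSdef]
  constructor
  · -- existence and uniqueness
    refine ⟨Φ, ⟨hΦι, hΦT⟩, ?_⟩
    intro Φ' ⟨h1, h2⟩
    apply AlgHom.ext
    intro p
    rw [hhom Φ' h1 h2 p, hhom Φ hΦι hΦT p]
  · -- bijectivity in the strong case
    intro hstrong Φ' h1 h2
    have h2' : ∀ i, Φ' (T i) = S i := fun i => h2 i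
    have hΦ'eq : ∀ p, Φ' p = LS (eT.symm p) := hhom Φ' h1 h2'
    obtain ⟨u, hu⟩ : ∃ u : Fin n → A, ∀ i, y i * u i = 1 := by
      have h := fun i => (hstrong i).exists_right_inv
      exact ⟨fun i => (h i).choose, fun i => (h i).choose_spec⟩
    have hlt_add : ∀ (m : Fin n → ℕ) (i : Fin n), m < m + Pi.single i 1 := by
      intro m i
      refine lt_of_le_of_ne (fun j => ?_) (fun h => ?_)
      · exact Nat.le_add_right _ _
      · have := congrFun h i
        simp [Pi.single_eq_same] at this
    have hBpd : ∀ (m : Fin n → ℕ) (i : Fin n),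
        monL pd (m + Pi.single i 1) = monL pd m * pd i := by
      intro m i
      rw [hBadd, monL_single]
    -- master commutation lemma
    have master : ∀ (N : ℕ) (k : Fin n → ℕ), (∑ i, k i) = N → ∀ a : A,
        ∃ r : (Fin n → ℕ) →₀ A, (∀ k', r k' ≠ 0 → k' < k) ∧
          monL pd k * ιB a = ιB (monL σ k a) * monL pd k + LB r := by
      intro N
      induction N using Nat.strong_induction_on with
      | _ N ih =>
        intro k hk a
        by_cases hk0 : k = 0
        · subst hk0
          refine ⟨0, by simp, ?_⟩
          rw [monL_zero, monL_zero, map_zero, one_mul, mul_one, AlgHom.one_apply, add_zero]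
        · obtain ⟨i, hi⟩ : ∃ i, k i ≠ 0 := by
            by_contra h
            push_neg at h
            exact hk0 (funext fun i => h i)
          set k' : Fin n → ℕ := Function.update k i (k i - 1) with hk'def
          have hdecomp : k = k' + Pi.single i 1 := by
            funext j
            show k j = k' j + (Pi.single i 1 : Fin n → ℕ) j
            rcases eq_or_ne j i with rfl | hne
            · rw [hk'def, Function.update_self, Pi.single_eq_same]
              omega
            · rw [hk'def, Function.update_of_ne hne, Pi.single_eq_of_ne hne, add_zero]
          have hsum' : (∑ j, k' j) < N := by
            rw [← hk]
            apply Finset.sum_lt_sum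
            · intro j _
              rcases eq_or_ne j i with rfl | hne
              · rw [hk'def, Function.update_self]; omega
              · rw [hk'def, Function.update_of_ne hne]
            · exact ⟨i, Finset.mem_univ i, by rw [hk'def, Function.update_self]; omega⟩
          have hklt : k' < k := by rw [hdecomp]; exact hlt_add k' i
          have hmon : monL pd k = monL pd k' * pd i := by
            rw [hdecomp]; exact hBpd k' i
          have hσdec : ∀ b : A, monL σ k b = monL σ k' (σ i b) := by
            intro b
            rw [hdecomp, hσadd, monL_single, AlgHom.mul_apply]
          obtain ⟨rA, hrA, heA⟩ := ih _ hsum' k' rfl (pdA i a)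
          obtain ⟨rB, hrB, heB⟩ := ih _ hsum' k' rfl (σ i a)
          refine ⟨Finsupp.single k' (monL σ k' (pdA i a)) + rA
            + rB.mapDomain (· + Pi.single i 1), ?_, ?_⟩
          · intro k'' hne0
            have : Finsupp.single k' (monL σ k' (pdA i a)) k'' ≠ 0 ∨ rA k'' ≠ 0 ∨
                (rB.mapDomain (· + Pi.single i 1)) k'' ≠ 0 := by
              by_contra hcon
              push_neg at hcon
              apply hne0
              simp [Finsupp.add_apply, hcon.1, hcon.2.1, hcon.2.2]
            rcases this with hne1 | hne1 | hne1
            · have : k'' = k' := by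
                by_contra hne2
                exact hne1 (Finsupp.single_eq_of_ne' (Ne.symm hne2))
              rw [this]; exact hklt
            · exact lt_trans (hrA k'' hne1) hklt
            · have hmem : k'' ∈ (rB.mapDomain (· + Pi.single i 1)).support :=
                Finsupp.mem_support_iff.mpr hne1
              have hsub := Finsupp.mapDomain_support (f := (· + Pi.single i 1)) (s := rB)
              obtain ⟨m, hm, rfl⟩ := Finset.mem_image.mp (hsub hmem)
              have hmlt : m < k' := hrB m (Finsupp.mem_support_iff.mp hm)
              rw [hdecomp]
              exact add_lt_add_left hmlt _
          · have hmapD : LB (rB.mapDomain (· + Pi.single i 1)) = LB rB * pd i :=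
              coeffMap_mapDomain ιB pd _ (pd i) (fun m => hBpd m i) rB
            rw [map_add, map_add, hmapD, hLB_single]
            calc monL pd k * ιB a = monL pd k' * (pd i * ιB a) := by
                  rw [hmon, mul_assoc]
              _ = monL pd k' * ιB (pdA i a) + (monL pd k' * ιB (σ i a)) * pd i := by
                  rw [hrelB]; noncomm_ring
              _ = (ιB (monL σ k' (pdA i a)) * monL pd k' + LB rA)
                  + (ιB (monL σ k' (σ i a)) * monL pd k' + LB rB) * pd i := by
                  rw [heA, heB]
              _ = ιB (monL σ k a) * monL pd k + (ιB (monL σ k' (pdA i a)) * monL pd k'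
                  + LB rA + LB rB * pd i) := by
                  rw [hσdec a, hmon]; noncomm_ring
    have strB_mulι : ∀ (k : Fin n → ℕ) (r : (Fin n → ℕ) →₀ A) (a : A),
        (∀ k', r k' ≠ 0 → k' < k) →
        ∃ r₂ : (Fin n → ℕ) →₀ A, (∀ k', r₂ k' ≠ 0 → k' < k) ∧ LB r * ιB a = LB r₂ := by
      intro k r a
      induction r using Finsupp.induction with
      | zero => intro _; exact ⟨0, by simp, by simp⟩
      | single_add k₀ b₀ f hk₀f hb₀ ihf =>
        intro hsupp
        have hk₀ : k₀ < k := by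
          apply hsupp k₀
          have hv : (Finsupp.single k₀ b₀ + f) k₀ = b₀ := by
            rw [Finsupp.add_apply, Finsupp.single_eq_same,
              Finsupp.notMem_support_iff.mp hk₀f, add_zero]
          rw [hv]; exact hb₀
        have hsuppf : ∀ k', f k' ≠ 0 → k' < k := by
          intro k' hf'
          apply hsupp k'
          have hne : k' ≠ k₀ := by
            rintro rfl
            exact hf' (Finsupp.notMem_support_iff.mp hk₀f)
          rw [Finsupp.add_apply, Finsupp.single_eq_of_ne' (Ne.symm hne), zero_add]
          exact hf'
        obtain ⟨rf, hrf, hef⟩ := ihf hsuppf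
        obtain ⟨rm, hrm, hem⟩ := master (∑ j, k₀ j) k₀ rfl a
        refine ⟨Finsupp.single k₀ (b₀ * monL σ k₀ a) + b₀ • rm + rf, ?_, ?_⟩
        · intro k'' hne0
          have hcases : Finsupp.single k₀ (b₀ * monL σ k₀ a) k'' ≠ 0 ∨ (b₀ • rm) k'' ≠ 0 ∨
              rf k'' ≠ 0 := by
            by_contra hcon
            push_neg at hcon
            apply hne0
            rw [Finsupp.add_apply, Finsupp.add_apply, hcon.1, hcon.2.1, hcon.2.2]
            simp
          rcases hcases with h | h | h
          · have : k'' = k₀ := by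
              by_contra hne2
              exact h (Finsupp.single_eq_of_ne' (Ne.symm hne2))
            rw [this]; exact hk₀
          · have : rm k'' ≠ 0 := by
              intro h0; apply h; rw [Finsupp.smul_apply, h0, smul_zero]
            exact lt_trans (hrm k'' this) hk₀
          · exact hrf k'' h
        · rw [map_add, add_mul, hef, map_add, map_add, hLB_single, hLB_single, coeffMap_smul]
          congr 1
          calc ιB b₀ * monL pd k₀ * ιB a = ιB b₀ * (monL pd k₀ * ιB a) := by rw [mul_assoc]
            _ = ιB b₀ * (ιB (monL σ k₀ a) * monL pd k₀ + LB rm) := by rw [hem]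
            _ = ιB (b₀ * monL σ k₀ a) * monL pd k₀ + ιB b₀ * LB rm := by
                rw [map_mul]; noncomm_ring
    -- leading coefficient expansion of the S-monomials
    have lead : ∀ (N : ℕ) (k : Fin n → ℕ), (∑ i, k i) = N →
        ∃ w : A, IsUnit w ∧ ∃ r : (Fin n → ℕ) →₀ A, (∀ k', r k' ≠ 0 → k' < k) ∧
          monL S k = ιB w * monL pd k + LB r := by
      intro N
      induction N using Nat.strong_induction_on with
      | _ N ih =>
        intro k hk
        by_cases hk0 : k = 0
        · subst hk0
          exact ⟨1, isUnit_one, 0, by simp, by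
            rw [monL_zero, monL_zero, map_one, one_mul, map_zero, add_zero]⟩
        · obtain ⟨i, hi⟩ : ∃ i, k i ≠ 0 := by
            by_contra h
            push_neg at h
            exact hk0 (funext fun i => h i)
          set k' : Fin n → ℕ := Function.update k i (k i - 1) with hk'def
          have hdecomp : k = k' + Pi.single i 1 := by
            funext j
            show k j = k' j + (Pi.single i 1 : Fin n → ℕ) j
            rcases eq_or_ne j i with rfl | hne
            · rw [hk'def, Function.update_self, Pi.single_eq_same]
              omega
            · rw [hk'def, Function.update_of_ne hne, Pi.single_eq_of_ne hne, add_zero]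
          have hsum' : (∑ j, k' j) < N := by
            rw [← hk]
            apply Finset.sum_lt_sum
            · intro j _
              rcases eq_or_ne j i with rfl | hne
              · rw [hk'def, Function.update_self]; omega
              · rw [hk'def, Function.update_of_ne hne]
            · exact ⟨i, Finset.mem_univ i, by rw [hk'def, Function.update_self]; omega⟩
          have hklt : k' < k := by
            rw [hdecomp]; exact hlt_add k' i
          have hmon : monL pd k = monL pd k' * pd i := by
            rw [hdecomp]; exact hBpd k' i
          obtain ⟨w', hw', r', hr', he'⟩ := ih _ hsum' k' rfl
          obtain ⟨rm, hrm, hem⟩ := master (∑ j, k' j) k' rfl (y i)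
          obtain ⟨rι, hrι, heι⟩ := strB_mulι k' r' (y i) hr'
          refine ⟨-(w' * monL σ k' (y i)), (hw'.mul ((hstrong i).map (monL σ k'))).neg,
            Finsupp.single k' w' + r' - (w' • rm).mapDomain (· + Pi.single i 1)
              - rι.mapDomain (· + Pi.single i 1), ?_, ?_⟩
          · intro k'' hne0
            have hcases : Finsupp.single k' w' k'' ≠ 0 ∨ r' k'' ≠ 0 ∨
                ((w' • rm).mapDomain (· + Pi.single i 1)) k'' ≠ 0 ∨
                (rι.mapDomain (· + Pi.single i 1)) k'' ≠ 0 := by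
              by_contra hcon
              push_neg at hcon
              apply hne0
              rw [Finsupp.sub_apply, Finsupp.sub_apply, Finsupp.add_apply, hcon.1, hcon.2.1,
                hcon.2.2.1, hcon.2.2.2]
              simp
            rcases hcases with h | h | h | h
            · have : k'' = k' := by
                by_contra hne2
                exact h (Finsupp.single_eq_of_ne' (Ne.symm hne2))
              rw [this]; exact hklt
            · exact lt_trans (hr' k'' h) hklt
            · have hmem : k'' ∈ ((w' • rm).mapDomain (· + Pi.single i 1)).support :=
                Finsupp.mem_support_iff.mpr h
              have hsub := Finsupp.mapDomain_support (f := (· + Pi.single i 1)) (s := w' • rm)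
              obtain ⟨m, hm, rfl⟩ := Finset.mem_image.mp (hsub hmem)
              have hmne : rm m ≠ 0 := by
                intro h0
                have := Finsupp.mem_support_iff.mp hm
                apply this
                rw [Finsupp.smul_apply, h0, smul_zero]
              have hmlt : m < k' := hrm m hmne
              rw [hdecomp]
              exact add_lt_add_left hmlt _
            · have hmem : k'' ∈ (rι.mapDomain (· + Pi.single i 1)).support :=
                Finsupp.mem_support_iff.mpr h
              have hsub := Finsupp.mapDomain_support (f := (· + Pi.single i 1)) (s := rι)
              obtain ⟨m, hm, rfl⟩ := Finset.mem_image.mp (hsub hmem)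
              have hmlt : m < k' := hrι m (Finsupp.mem_support_iff.mp hm)
              rw [hdecomp]
              exact add_lt_add_left hmlt _
          · have hmapD1 : LB ((w' • rm).mapDomain (· + Pi.single i 1))
                = (ιB w' * LB rm) * pd i := by
              rw [coeffMap_mapDomain ιB pd _ (pd i) (fun m => hBpd m i), coeffMap_smul]
            have hmapD2 : LB (rι.mapDomain (· + Pi.single i 1))
                = (LB r' * ιB (y i)) * pd i := by
              rw [coeffMap_mapDomain ιB pd _ (pd i) (fun m => hBpd m i), ← heι]
            have hmonS : monL S k = monL S k' * S i := by
              rw [hdecomp, hSadd, monL_single]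
            have hneg : ιB (-(w' * monL σ k' (y i)))
                = -(ιB w' * ιB (monL σ k' (y i))) := by
              rw [map_neg, map_mul]
            have hc : LB ((Finsupp.single k' w') + r'
                  - (w' • rm).mapDomain (· + Pi.single i 1)
                  - rι.mapDomain (· + Pi.single i 1))
                = ιB w' * monL pd k' + LB r' - ιB w' * LB rm * pd i
                  - LB r' * ιB (y i) * pd i := by
              rw [map_sub, map_sub, map_add, hLB_single, hmapD1, hmapD2]
            have hrm' : LB rm = monL pd k' * ιB (y i)
                - ιB (monL σ k' (y i)) * monL pd k' := by
              rw [hem]; abel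
            rw [hc, hmonS, he', hSdef i, hneg, hmon, hrm']
            noncomm_ring
    have lead' : ∀ k : Fin n → ℕ, ∃ w : A, IsUnit w ∧ ∃ r : (Fin n → ℕ) →₀ A,
        (∀ k', r k' ≠ 0 → k' < k) ∧ monL S k = ιB w * monL pd k + LB r :=
      fun k => lead (∑ i, k i) k rfl
    choose w hwunit r hrsupp hreq using lead'
    have hLSc : ∀ c, LS c = LB (c.sum fun k a => Finsupp.single k (a * w k) + a • r k) := by
      intro c
      induction c using Finsupp.induction_linear with
      | zero => rw [map_zero, Finsupp.sum_zero_index, map_zero]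
      | add f g hf hg =>
        rw [map_add, hf, hg, ← map_add, Finsupp.sum_add_index]
        · intro k _
          rw [zero_mul, Finsupp.single_zero, zero_smul, add_zero]
        · intro k _ a a'
          rw [add_mul, Finsupp.single_add, add_smul]
          abel
      | single k a =>
        rw [hLS_single, hreq k, Finsupp.sum_single_index
          (by rw [zero_mul, Finsupp.single_zero, zero_smul, add_zero]),
          map_add, hLB_single, coeffMap_smul, map_mul]
        noncomm_ring
    have hLSinj : Function.Injective LS := by
      have hker : ∀ c, LS c = 0 → c = 0 := by
        intro c hc
        by_contra hc0
        have hρ0 : (c.sum fun k a => Finsupp.single k (a * w k) + a • r k) = 0 := by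
          apply hLBinj
          rw [← hLSc, hc, map_zero]
        obtain ⟨k₀, hk₀mem, hk₀max⟩ : ∃ k₀ ∈ c.support, ∀ k ∈ c.support, ¬ k₀ < k := by
          obtain ⟨k₀, hk⟩ := Finset.exists_maximal (Finsupp.support_nonempty_iff.mpr hc0)
          exact ⟨k₀, hk.1, fun k hk' hlt => hlt.not_ge (hk.2 hk' hlt.le)⟩
        have hvals : (c.sum fun k a => Finsupp.single k (a * w k) + a • r k) k₀
            = c k₀ * w k₀ := by
          rw [Finsupp.sum_apply, Finsupp.sum, Finset.sum_eq_single k₀]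
          · rw [Finsupp.add_apply, Finsupp.single_eq_same, Finsupp.smul_apply]
            have hz : r k₀ k₀ = 0 := by
              by_contra h
              exact lt_irrefl k₀ (hrsupp k₀ k₀ h)
            rw [hz, smul_zero, add_zero]
          · intro k hk hne
            rw [Finsupp.add_apply, Finsupp.single_eq_of_ne' hne, Finsupp.smul_apply]
            have hz : r k k₀ = 0 := by
              by_contra h
              exact hk₀max k hk (hrsupp k k₀ h)
            rw [hz, smul_zero, zero_add]
          · intro h
            exact absurd hk₀mem h
        have hmul0 : c k₀ * w k₀ = 0 := by
          rw [← hvals, hρ0]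
          rfl
        have hck : c k₀ = 0 := ((hwunit k₀).mul_left_eq_zero).mp hmul0
        exact Finsupp.mem_support_iff.mp hk₀mem hck
      intro c c' h
      have hd := hker (c - c') (by rw [map_sub, h, sub_self])
      exact sub_eq_zero.mp hd
    constructor
    · intro p q h
      rw [hΦ'eq p, hΦ'eq q] at h
      exact eT.symm.injective (hLSinj h)
    · intro b
      obtain ⟨c, rfl⟩ := hLBsurj b
      have hιmem : ∀ a, ιB a ∈ Φ'.range := fun a => ⟨ιP a, h1 a⟩
      have hpdmem : ∀ i, pd i ∈ Φ'.range := by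
        intro i
        rw [AlgHom.mem_range]
        refine ⟨ιP (u i) * (1 - T i), ?_⟩
        rw [map_mul, map_sub, map_one, h1, h2' i, hSdef i]
        have hsub : (1 : B) - (1 - ιB (y i) * pd i) = ιB (y i) * pd i := by
          abel
        rw [hsub, ← mul_assoc, ← map_mul, mul_comm (u i) (y i), hu i, map_one, one_mul]
      have hmem : LB c ∈ Φ'.range := by
        rw [hLBdef, coeffMap_apply]
        have hsum : (c.sum fun k a => ιB a * monL pd k)
            = ∑ k ∈ c.support, ιB (c k) * monL pd k := rfl
        rw [hsum]
        apply Subalgebra.sum_mem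
        intro k _
        apply mul_mem (hιmem (c k))
        apply Subalgebra.list_prod_mem
        intro z hz
        rw [List.mem_ofFn] at hz
        obtain ⟨i, rfl⟩ := hz
        exact pow_mem (hpdmem i) _
      obtain ⟨p, hp⟩ := hmem
      exact ⟨p, hp⟩
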